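/- arXiv:1902.10165 — 2 statements merged into one kernel-verified Lean document; each statement's English description precedes it below -/
import Mathlib

section
/- Let γ > 0 and let f : [1,∞) → (0,1] be non-increasing and regularly varying at infinity with index −γ, i.e. for every a > 0, f(a·t)/f(t) → a^(−γ) as t → ∞. Then, with the sum taken over integers s, lim_{t→∞} [ −log( ∑_{s = ⌈t^{1/13}⌉}^{t} f(s)/s ) ] / log t = γ/13. -/
open Filter Real

open Topology

private lemma aux_div_n (u : ℕ → ℝ) (l : ℝ)
    (h : Tendsto (fun n => u (n+1) - u n) atTop (𝓝 l)) :
    Tendsto (fun n : ℕ => u n / n) atTop (𝓝 l) := by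
  have hc := h.cesaro
  have key : ∀ n : ℕ, (n:ℝ)⁻¹ * ∑ i ∈ Finset.range n, (u (i+1) - u i) = u n / n - u 0 / n := by
    intro n; rw [Finset.sum_range_sub]; ring
  have h2 : Tendsto (fun n : ℕ => u n / n - u 0 / n) atTop (𝓝 l) := hc.congr (fun n => key n)
  have h3 : Tendsto (fun n : ℕ => u 0 / n) atTop (𝓝 0) :=
    tendsto_const_nhds.div_atTop tendsto_natCast_atTop_atTop
  simpa using h2.add h3

private lemma div_mono_nonpos {c a b : ℝ} (hc : c ≤ 0) (ha : 0 < a) (hab : a ≤ b) : c / a ≤ c / b := by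
  rw [div_le_div_iff₀ ha (ha.trans_le hab)]; nlinarith

private lemma log_f_div_log (γ : ℝ) (f : ℝ → ℝ)
    (hpos : ∀ t : ℝ, 1 ≤ t → 0 < f t)
    (hle1 : ∀ t : ℝ, 1 ≤ t → f t ≤ 1)
    (hmono : ∀ s t : ℝ, 1 ≤ s → s ≤ t → f t ≤ f s)
    (hrv2 : Tendsto (fun t : ℝ => f (2 * t) / f t) atTop (𝓝 ((2:ℝ) ^ (-γ)))) :
    Tendsto (fun x : ℝ => Real.log (f x) / Real.log x) atTop (𝓝 (-γ)) := by
  have h2pos : (0:ℝ) < (2:ℝ) ^ (-γ) := rpow_pos_of_pos two_pos _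
  have hlog2 : (0:ℝ) < Real.log 2 := Real.log_pos one_lt_two
  have hd : Tendsto (fun t : ℝ => Real.log (f (2*t)) - Real.log (f t)) atTop
      (𝓝 (-γ * Real.log 2)) := by
    have hcont : Tendsto (fun t : ℝ => Real.log (f (2*t) / f t)) atTop
        (𝓝 (Real.log ((2:ℝ) ^ (-γ)))) :=
      (Real.continuousAt_log h2pos.ne').tendsto.comp hrv2
    rw [Real.log_rpow two_pos] at hcont
    refine hcont.congr' ?_
    filter_upwards [eventually_ge_atTop (1:ℝ)] with t ht
    have h1 : (1:ℝ) ≤ 2*t := by linarith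
    rw [Real.log_div (hpos _ h1).ne' (hpos _ ht).ne']
  set u : ℕ → ℝ := fun n => Real.log (f ((2:ℝ)^n)) with hu_def
  have hpow : Tendsto (fun n : ℕ => (2:ℝ)^n) atTop atTop :=
    tendsto_pow_atTop_atTop_of_one_lt one_lt_two
  have hud : Tendsto (fun n => u (n+1) - u n) atTop (𝓝 (-γ * Real.log 2)) := by
    have := hd.comp hpow
    refine this.congr (fun n => ?_)
    simp only [Function.comp, hu_def, pow_succ]
    ring_nf
  have hu : Tendsto (fun n : ℕ => u n / n) atTop (𝓝 (-γ * Real.log 2)) :=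
    aux_div_n u _ hud
  have hrat1 : Tendsto (fun k : ℕ => ((k:ℝ)+1) / k) atTop (𝓝 1) := by
    have h : Tendsto (fun k : ℕ => 1 + (k:ℝ)⁻¹) atTop (𝓝 (1+0)) :=
      tendsto_const_nhds.add (tendsto_inv_atTop_zero.comp tendsto_natCast_atTop_atTop)
    rw [add_zero] at h
    refine h.congr' ?_
    filter_upwards [eventually_ge_atTop 1] with k hk
    have hk' : (k:ℝ) ≠ 0 := Nat.cast_ne_zero.mpr (by omega)
    field_simp
  have hrat2 : Tendsto (fun k : ℕ => (k:ℝ) / (k+1)) atTop (𝓝 1) := by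
    have h := hrat1.inv₀ one_ne_zero
    rw [inv_one] at h
    refine h.congr (fun k => ?_)
    rw [inv_div]
  have hLb : Tendsto (fun k : ℕ => u (k+1) / ((k:ℝ) * Real.log 2)) atTop (𝓝 (-γ)) := by
    have h1 : Tendsto (fun k : ℕ => u (k+1) / ((k:ℝ)+1)) atTop (𝓝 (-γ * Real.log 2)) := by
      have h2 := hu.comp (tendsto_add_atTop_nat 1)
      refine h2.congr (fun k => ?_)
      simp [Function.comp]
    have h3 := (h1.mul hrat1).div_const (Real.log 2)
    have heq : (-γ * Real.log 2 * 1) / Real.log 2 = -γ := by field_simp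
    rw [heq] at h3
    refine h3.congr' ?_
    filter_upwards [eventually_ge_atTop 1] with k hk
    have hk' : (k:ℝ) ≠ 0 := Nat.cast_ne_zero.mpr (by omega)
    have hk1 : ((k:ℝ)+1) ≠ 0 := by positivity
    field_simp

  have hUb : Tendsto (fun k : ℕ => u k / (((k:ℝ)+1) * Real.log 2)) atTop (𝓝 (-γ)) := by
    have h3 := (hu.mul hrat2).div_const (Real.log 2)
    have heq : (-γ * Real.log 2 * 1) / Real.log 2 = -γ := by field_simp
    rw [heq] at h3
    refine h3.congr' ?_
    filter_upwards [eventually_ge_atTop 1] with k hk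
    have hk' : (k:ℝ) ≠ 0 := Nat.cast_ne_zero.mpr (by omega)
    have hk1 : ((k:ℝ)+1) ≠ 0 := by positivity
    field_simp

  set N : ℝ → ℕ := fun x => ⌊Real.logb 2 x⌋₊ with hN_def
  have hNt : Tendsto N atTop atTop :=
    tendsto_nat_floor_atTop.comp (Real.tendsto_logb_atTop one_lt_two)
  refine tendsto_of_tendsto_of_tendsto_of_le_of_le' (hLb.comp hNt) (hUb.comp hNt) ?_ ?_ <;>
  · filter_upwards [eventually_ge_atTop (2:ℝ)] with x hx
    have hx1 : (1:ℝ) ≤ x := by linarith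
    have hx0 : (0:ℝ) < x := by linarith
    have hlb1 : (1:ℝ) ≤ Real.logb 2 x := by
      rw [Real.le_logb_iff_rpow_le one_lt_two hx0]; simpa using hx
    have hN1 : 1 ≤ N x := Nat.le_floor (by exact_mod_cast hlb1)
    have hNle : (N x : ℝ) ≤ Real.logb 2 x := Nat.floor_le (by linarith)
    have hNlt : Real.logb 2 x < (N x : ℝ) + 1 := Nat.lt_floor_add_one _
    have h2N1 : (1:ℝ) ≤ (2:ℝ)^(N x) := one_le_pow₀ one_le_two
    have h2N1' : (1:ℝ) ≤ (2:ℝ)^(N x + 1) := one_le_pow₀ one_le_two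
    have hxlow : (2:ℝ)^(N x) ≤ x := by
      calc (2:ℝ)^(N x) = (2:ℝ)^((N x : ℝ)) := by rw [Real.rpow_natCast]
        _ ≤ (2:ℝ)^(Real.logb 2 x) := Real.rpow_le_rpow_of_exponent_le one_le_two hNle
        _ = x := Real.rpow_logb two_pos (by norm_num) hx0
    have hxhigh : x ≤ (2:ℝ)^(N x + 1) := by
      calc x = (2:ℝ)^(Real.logb 2 x) := (Real.rpow_logb two_pos (by norm_num) hx0).symm
        _ ≤ (2:ℝ)^(((N x : ℝ)) + 1) := Real.rpow_le_rpow_of_exponent_le one_le_two hNlt.le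
        _ = (2:ℝ)^(N x + 1) := by rw [← Real.rpow_natCast]; push_cast; ring_nf
    have hlogx_low : (N x : ℝ) * Real.log 2 ≤ Real.log x := by
      rw [Real.logb, le_div_iff₀ hlog2] at hNle; linarith
    have hlogx_high : Real.log x ≤ ((N x : ℝ) + 1) * Real.log 2 := by
      rw [Real.logb, div_lt_iff₀ hlog2] at hNlt; linarith
    have hlogx_pos : (0:ℝ) < Real.log x := Real.log_pos (by linarith)
    have hNlogpos : (0:ℝ) < (N x : ℝ) * Real.log 2 := by
      have h1N : (1:ℝ) ≤ (N x : ℝ) := by exact_mod_cast hN1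
      positivity
    first
    | · -- lower bound : u (N x + 1) / (N x * log 2) ≤ log (f x) / log x
        have hgu : u (N x + 1) ≤ Real.log (f x) :=
          Real.log_le_log (hpos _ (hx1.trans hxhigh)) (hmono x _ hx1 hxhigh)
        have hule : u (N x + 1) ≤ 0 :=
          Real.log_nonpos (hpos _ h2N1').le (hle1 _ h2N1')
        calc u (N x + 1) / ((N x : ℝ) * Real.log 2)
            ≤ u (N x + 1) / Real.log x := div_mono_nonpos hule hNlogpos hlogx_low
          _ ≤ Real.log (f x) / Real.log x := by gcongr
    | · -- upper bound
        have hgu : Real.log (f x) ≤ u (N x) :=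
          Real.log_le_log (hpos _ hx1) (hmono _ x h2N1 hxlow)
        have hule : u (N x) ≤ 0 :=
          Real.log_nonpos (hpos _ h2N1).le (hle1 _ h2N1)
        calc Real.log (f x) / Real.log x
            ≤ u (N x) / Real.log x := by gcongr
          _ ≤ u (N x) / (((N x : ℝ) + 1) * Real.log 2) :=
            div_mono_nonpos hule hlogx_pos hlogx_high

/-- If `f : [1,∞) → (0,1]` is non-increasing and regularly varying at infinity with
index `-γ` (γ > 0), then `-log(∑_{s=⌈t^{1/13}⌉}^{t} f(s)/s) / log t → γ/13` as `t → ∞`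
(the sum being over integers `s`). -/
theorem regularly_varying_tail_sum_log (γ : ℝ) (hγ : 0 < γ) (f : ℝ → ℝ)
    (hrange : ∀ t : ℝ, 1 ≤ t → f t ∈ Set.Ioc (0 : ℝ) 1)
    (hmono : ∀ s t : ℝ, 1 ≤ s → s ≤ t → f t ≤ f s)
    (hrv : ∀ a : ℝ, 0 < a →
      Tendsto (fun t : ℝ => f (a * t) / f t) atTop (nhds (a ^ (-γ)))) :
    Tendsto
      (fun t : ℕ =>
        -Real.log (∑ s ∈ Finset.Icc ⌈(t : ℝ) ^ ((1 : ℝ) / 13)⌉₊ t, f s / s) / Real.log t)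
      atTop (nhds (γ / 13)) := by
  have hpos : ∀ t : ℝ, 1 ≤ t → 0 < f t := fun t ht => (hrange t ht).1
  have hle1 : ∀ t : ℝ, 1 ≤ t → f t ≤ 1 := fun t ht => (hrange t ht).2
  have hlog := log_f_div_log γ f hpos hle1 hmono (hrv 2 two_pos)
  set m : ℕ → ℕ := fun t => ⌈(t : ℝ) ^ ((1 : ℝ) / 13)⌉₊ with hm_def
  -- basic limits
  have hpow13 : Tendsto (fun t : ℕ => ((t:ℝ))^((1:ℝ)/13)) atTop atTop :=
    (tendsto_rpow_atTop (by norm_num)).comp tendsto_natCast_atTop_atTop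
  have hmt : Tendsto (fun t : ℕ => ((m t : ℕ) : ℝ)) atTop atTop :=
    tendsto_atTop_mono (fun t => Nat.le_ceil _) hpow13
  have h2mt : Tendsto (fun t : ℕ => 2 * ((m t : ℕ) : ℝ)) atTop atTop :=
    hmt.const_mul_atTop two_pos
  have hlogt : Tendsto (fun t : ℕ => Real.log t) atTop atTop :=
    Real.tendsto_log_atTop.comp tendsto_natCast_atTop_atTop
  have hloginv : Tendsto (fun t : ℕ => (Real.log t)⁻¹) atTop (𝓝 0) :=
    tendsto_inv_atTop_zero.comp hlogt
  -- ratio m t / t^{1/13} → 1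
  have hratio : Tendsto (fun t : ℕ => ((m t : ℕ) : ℝ) / ((t:ℝ))^((1:ℝ)/13)) atTop (𝓝 1) := by
    have hup : Tendsto (fun t : ℕ => 1 + (((t:ℝ))^((1:ℝ)/13))⁻¹) atTop (𝓝 (1+0)) :=
      tendsto_const_nhds.add (tendsto_inv_atTop_zero.comp hpow13)
    rw [add_zero] at hup
    refine tendsto_of_tendsto_of_tendsto_of_le_of_le' tendsto_const_nhds hup ?_ ?_
    · filter_upwards [eventually_ge_atTop 1] with t ht
      have h1 : (1:ℝ) ≤ ((t:ℝ))^((1:ℝ)/13) :=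
        Real.one_le_rpow (by exact_mod_cast ht) (by norm_num)
      have hle : ((t:ℝ))^((1:ℝ)/13) ≤ ((m t : ℕ) : ℝ) := Nat.le_ceil _
      rw [le_div_iff₀ (by linarith)]
      linarith
    · filter_upwards [eventually_ge_atTop 1] with t ht
      have h0 : (0:ℝ) < ((t:ℝ))^((1:ℝ)/13) := by
        apply Real.rpow_pos_of_pos
        exact_mod_cast Nat.pos_of_ne_zero (by omega)
      have hceil : ((m t : ℕ) : ℝ) < ((t:ℝ))^((1:ℝ)/13) + 1 :=
        Nat.ceil_lt_add_one h0.le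
      rw [div_le_iff₀ h0]
      have : (1 + (((t:ℝ))^((1:ℝ)/13))⁻¹) * ((t:ℝ))^((1:ℝ)/13)
          = ((t:ℝ))^((1:ℝ)/13) + 1 := by field_simp
      rw [this]
      linarith
  -- log m / log t → 1/13
  have hlm : Tendsto (fun t : ℕ => Real.log ((m t : ℕ) : ℝ) / Real.log t) atTop (𝓝 (1/13)) := by
    have h1 : Tendsto (fun t : ℕ => Real.log (((m t : ℕ) : ℝ) / ((t:ℝ))^((1:ℝ)/13)))
        atTop (𝓝 0) := by
      have := (Real.continuousAt_log one_ne_zero).tendsto.comp hratio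
      simpa [Function.comp_def] using this
    have h2 : Tendsto (fun t : ℕ => Real.log (((m t : ℕ) : ℝ) / ((t:ℝ))^((1:ℝ)/13))
        * (Real.log t)⁻¹ + 1/13) atTop (𝓝 (0 * 0 + 1/13)) :=
      (h1.mul hloginv).add tendsto_const_nhds
    rw [zero_mul, zero_add] at h2
    refine h2.congr' ?_
    filter_upwards [eventually_ge_atTop 2, hmt.eventually_ge_atTop 1] with t ht hmt1
    have ht0 : (0:ℝ) < (t:ℝ) := by positivity
    have hlt : (0:ℝ) < Real.log t := Real.log_pos (by exact_mod_cast by omega)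
    have hm0 : ((m t : ℕ) : ℝ) ≠ 0 := by linarith
    have hp0 : ((t:ℝ))^((1:ℝ)/13) ≠ 0 := (Real.rpow_pos_of_pos ht0 _).ne'
    rw [Real.log_div hm0 hp0, Real.log_rpow ht0]
    field_simp
    ring
  -- log(2m)/log t → 1/13
  have hl2m : Tendsto (fun t : ℕ => Real.log (2 * ((m t : ℕ) : ℝ)) / Real.log t)
      atTop (𝓝 (1/13)) := by
    have h2 : Tendsto (fun t : ℕ => Real.log 2 * (Real.log t)⁻¹
        + Real.log ((m t : ℕ) : ℝ) / Real.log t) atTop (𝓝 (Real.log 2 * 0 + 1/13)) :=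
      (tendsto_const_nhds.mul hloginv).add hlm
    rw [mul_zero, zero_add] at h2
    refine h2.congr' ?_
    filter_upwards [eventually_ge_atTop 2, hmt.eventually_ge_atTop 1] with t ht hmt1
    rw [Real.log_mul two_ne_zero (by linarith)]
    ring
  -- -log f(m t)/log t → γ/13
  have hA : Tendsto (fun t : ℕ => -Real.log (f ((m t : ℕ) : ℝ)) / Real.log t)
      atTop (𝓝 (γ/13)) := by
    have h1 := (hlog.comp hmt).mul hlm
    have h2 := h1.neg
    have : -(-γ * (1/13)) = γ/13 := by ring
    rw [this] at h2
    refine h2.congr' ?_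
    filter_upwards [hmt.eventually_ge_atTop 2] with t hmt2
    have hlm0 : Real.log ((m t : ℕ) : ℝ) ≠ 0 := (Real.log_pos (by linarith)).ne'
    simp only [Function.comp]
    field_simp
  -- -log f(2 m t)/log t → γ/13
  have hB : Tendsto (fun t : ℕ => -Real.log (f (2 * ((m t : ℕ) : ℝ))) / Real.log t)
      atTop (𝓝 (γ/13)) := by
    have h1 := (hlog.comp h2mt).mul hl2m
    have h2 := h1.neg
    have : -(-γ * (1/13)) = γ/13 := by ring
    rw [this] at h2
    refine h2.congr' ?_
    filter_upwards [hmt.eventually_ge_atTop 1] with t hmt1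
    have hlm0 : Real.log (2 * ((m t : ℕ) : ℝ)) ≠ 0 :=
      (Real.log_pos (by linarith)).ne'
    simp only [Function.comp]
    field_simp
  -- log(1+y)/y → 0 along log t
  have hG : Tendsto (fun y : ℝ => Real.log (1+y)/y) atTop (𝓝 0) := by
    have l1 : Tendsto (fun y:ℝ => Real.log 2 / y) atTop (𝓝 0) :=
      tendsto_const_nhds.div_atTop tendsto_id
    have l2 : Tendsto (fun y:ℝ => Real.log y / y) atTop (𝓝 0) :=
      Real.isLittleO_log_id_atTop.tendsto_div_nhds_zero
    have hup : Tendsto (fun y:ℝ => Real.log 2 / y + Real.log y / y) atTop (𝓝 (0+0)) :=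
      l1.add l2
    rw [add_zero] at hup
    refine tendsto_of_tendsto_of_tendsto_of_le_of_le' tendsto_const_nhds hup ?_ ?_
    · filter_upwards [eventually_ge_atTop (1:ℝ)] with y hy
      have h0 : (0:ℝ) ≤ Real.log (1+y) := Real.log_nonneg (by linarith)
      positivity
    · filter_upwards [eventually_ge_atTop (1:ℝ)] with y hy
      have hy0 : (0:ℝ) < y := by linarith
      have h1 : Real.log (1+y) ≤ Real.log 2 + Real.log y := by
        rw [← Real.log_mul two_ne_zero hy0.ne']
        exact Real.log_le_log (by linarith) (by linarith)
      rw [← add_div]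
      gcongr
  have hC : Tendsto (fun t : ℕ => Real.log (1 + Real.log t) / Real.log t) atTop (𝓝 0) :=
    hG.comp hlogt
  -- eventually 2 * m t ≤ t
  have h14 : Tendsto (fun x:ℝ => x^((1:ℝ)/13)/x) atTop (𝓝 0) := by
    have h := tendsto_rpow_neg_atTop (show (0:ℝ) < 12/13 by norm_num)
    refine h.congr' ?_
    filter_upwards [eventually_gt_atTop (0:ℝ)] with x hx0
    rw [show -(12/13 : ℝ) = 1/13 - 1 by norm_num, Real.rpow_sub hx0, Real.rpow_one]
  have ev2m : ∀ᶠ t : ℕ in atTop, 2 * m t ≤ t := by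
    have hev := (h14.comp tendsto_natCast_atTop_atTop).eventually
      (eventually_le_nhds (show (0:ℝ) < 1/4 by norm_num))
    filter_upwards [hev, eventually_ge_atTop 8] with t h4 ht8
    have ht8' : (8:ℝ) ≤ (t:ℝ) := by exact_mod_cast ht8
    have ht0 : (0:ℝ) < (t:ℝ) := by linarith
    have h4' : ((t:ℝ))^((1:ℝ)/13) ≤ (t:ℝ)/4 := by
      have := h4
      simp only [Function.comp] at this
      rw [div_le_iff₀ ht0] at this
      linarith [this]
    have hceil : ((m t : ℕ) : ℝ) < ((t:ℝ))^((1:ℝ)/13) + 1 :=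
      Nat.ceil_lt_add_one (Real.rpow_pos_of_pos ht0 _).le
    rw [← Nat.cast_le (α := ℝ)]
    push_cast
    linarith
  -- composite limits
  have hAfull : Tendsto (fun t : ℕ => -Real.log (f ((m t : ℕ) : ℝ)) / Real.log t
      - Real.log (1 + Real.log t) / Real.log t) atTop (𝓝 (γ/13)) := by
    simpa using hA.sub hC
  have hBfull : Tendsto (fun t : ℕ => -Real.log (f (2*((m t : ℕ):ℝ))) / Real.log t
      + Real.log 2 * (Real.log t)⁻¹) atTop (𝓝 (γ/13)) := by
    simpa using hB.add (tendsto_const_nhds.mul hloginv)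
  -- key sum bounds
  have key : ∀ᶠ t : ℕ in atTop,
      f (2*((m t : ℕ):ℝ)) / 2 ≤ (∑ s ∈ Finset.Icc (m t) t, f s / s) ∧
      (∑ s ∈ Finset.Icc (m t) t, f s / s) ≤ f ((m t : ℕ):ℝ) * (1 + Real.log t) := by
    filter_upwards [ev2m, hmt.eventually_ge_atTop 1, eventually_ge_atTop 2] with t h2m hm1 ht2
    have hm1' : (1:ℝ) ≤ ((m t : ℕ):ℝ) := hm1
    have hmnat1 : 1 ≤ m t := by exact_mod_cast hm1'
    have hM0 : (0:ℝ) < ((m t : ℕ):ℝ) := by linarith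
    have h2M1 : (1:ℝ) ≤ 2*((m t : ℕ):ℝ) := by linarith
    have hf2m_pos : 0 < f (2*((m t : ℕ):ℝ)) := hpos _ h2M1
    have hfm_pos : 0 < f ((m t : ℕ):ℝ) := hpos _ hm1'
    constructor
    · -- lower bound
      have hsub : Finset.Icc (m t) (2 * m t) ⊆ Finset.Icc (m t) t :=
        Finset.Icc_subset_Icc_right h2m
      have step1 : ∑ s ∈ Finset.Icc (m t) (2 * m t), f s / s
          ≤ ∑ s ∈ Finset.Icc (m t) t, f s / s := by
        refine Finset.sum_le_sum_of_subset_of_nonneg hsub ?_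
        intro s hs _
        have hs1 : (1:ℝ) ≤ (s:ℝ) := by
          have := (Finset.mem_Icc.mp hs).1
          have : m t ≤ s := this
          exact_mod_cast le_trans hmnat1 this
        have : 0 < f s := hpos _ hs1
        positivity
      have step2 : (Finset.Icc (m t) (2 * m t)).card
          • (f (2*((m t : ℕ):ℝ)) / (2*((m t : ℕ):ℝ)))
          ≤ ∑ s ∈ Finset.Icc (m t) (2 * m t), f s / s := by
        refine Finset.card_nsmul_le_sum _ _ _ ?_
        intro s hs
        obtain ⟨hsl, hsr⟩ := Finset.mem_Icc.mp hs
        have hs1 : (1:ℝ) ≤ (s:ℝ) := by exact_mod_cast le_trans hmnat1 hsl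
        have hsr' : (s:ℝ) ≤ 2*((m t : ℕ):ℝ) := by
          have : (s:ℝ) ≤ ((2 * m t : ℕ):ℝ) := by exact_mod_cast hsr
          push_cast at this
          linarith
        have hfle : f (2*((m t : ℕ):ℝ)) ≤ f s := hmono _ _ hs1 hsr'
        have hs0 : (0:ℝ) < (s:ℝ) := by linarith
        exact div_le_div₀ (hpos _ hs1).le hfle hs0 hsr'
      have hcard : (Finset.Icc (m t) (2 * m t)).card = m t + 1 := by
        rw [Nat.card_Icc]; omega
      have step3 : f (2*((m t : ℕ):ℝ)) / 2
          ≤ (Finset.Icc (m t) (2 * m t)).card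
            • (f (2*((m t : ℕ):ℝ)) / (2*((m t : ℕ):ℝ))) := by
        rw [hcard, nsmul_eq_mul]
        push_cast
        rw [div_le_iff₀ (show (0:ℝ) < 2 by norm_num)]
        have hexp : (((m t : ℕ):ℝ) + 1) * (f (2*((m t : ℕ):ℝ)) / (2*((m t : ℕ):ℝ))) * 2
            = f (2*((m t : ℕ):ℝ)) * ((((m t : ℕ):ℝ) + 1) / ((m t : ℕ):ℝ)) := by
          field_simp
        rw [hexp]
        have h1 : (1:ℝ) ≤ (((m t : ℕ):ℝ) + 1) / ((m t : ℕ):ℝ) := by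
          rw [le_div_iff₀ hM0]; linarith
        nlinarith
      exact step3.trans (step2.trans step1)
    · -- upper bound
      have step1 : ∑ s ∈ Finset.Icc (m t) t, f s / s
          ≤ ∑ s ∈ Finset.Icc (m t) t, f ((m t : ℕ):ℝ) * ((s:ℝ))⁻¹ := by
        refine Finset.sum_le_sum ?_
        intro s hs
        obtain ⟨hsl, _⟩ := Finset.mem_Icc.mp hs
        have hsl' : ((m t : ℕ):ℝ) ≤ (s:ℝ) := by exact_mod_cast hsl
        have hs1 : (1:ℝ) ≤ (s:ℝ) := le_trans hm1' hsl'
        rw [div_eq_mul_inv]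
        exact mul_le_mul_of_nonneg_right (hmono _ _ hm1' hsl') (by positivity)
      have step2 : ∑ s ∈ Finset.Icc (m t) t, f ((m t : ℕ):ℝ) * ((s:ℝ))⁻¹
          = f ((m t : ℕ):ℝ) * ∑ s ∈ Finset.Icc (m t) t, ((s:ℝ))⁻¹ := by
        rw [Finset.mul_sum]
      have step3 : ∑ s ∈ Finset.Icc (m t) t, ((s:ℝ))⁻¹
          ≤ ∑ s ∈ Finset.Icc 1 t, ((s:ℝ))⁻¹ := by
        refine Finset.sum_le_sum_of_subset_of_nonneg
          (Finset.Icc_subset_Icc_left hmnat1) ?_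
        intro s _ _
        positivity
      have hh : ∑ s ∈ Finset.Icc 1 t, ((s:ℝ))⁻¹ = ((harmonic t : ℚ) : ℝ) := by
        rw [harmonic_eq_sum_Icc]
        push_cast
        rfl
      have step4 : ∑ s ∈ Finset.Icc 1 t, ((s:ℝ))⁻¹ ≤ 1 + Real.log t := by
        rw [hh]; exact_mod_cast harmonic_le_one_add_log t
      calc (∑ s ∈ Finset.Icc (m t) t, f s / s)
          ≤ f ((m t : ℕ):ℝ) * ∑ s ∈ Finset.Icc (m t) t, ((s:ℝ))⁻¹ := by
            rw [← step2]; exact step1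
        _ ≤ f ((m t : ℕ):ℝ) * (1 + Real.log t) := by
            exact mul_le_mul_of_nonneg_left (step3.trans step4) hfm_pos.le
  -- final squeeze
  refine tendsto_of_tendsto_of_tendsto_of_le_of_le' hAfull hBfull ?_ ?_
  · filter_upwards [key, hmt.eventually_ge_atTop 1, eventually_ge_atTop 2] with t hkey hm1 ht2
    obtain ⟨hlow, hhigh⟩ := hkey
    have hm1' : (1:ℝ) ≤ ((m t : ℕ):ℝ) := hm1
    have hfm_pos : 0 < f ((m t : ℕ):ℝ) := hpos _ hm1'
    have hf2m_pos : 0 < f (2*((m t : ℕ):ℝ)) := hpos _ (by linarith)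
    have hlt : (0:ℝ) < Real.log t := Real.log_pos (by exact_mod_cast by omega)
    have hS_pos : 0 < ∑ s ∈ Finset.Icc (m t) t, f s / s :=
      lt_of_lt_of_le (by positivity) hlow
    have hlogS : Real.log (∑ s ∈ Finset.Icc (m t) t, f s / s)
        ≤ Real.log (f ((m t : ℕ):ℝ)) + Real.log (1 + Real.log t) := by
      rw [← Real.log_mul hfm_pos.ne' (by positivity)]
      exact Real.log_le_log hS_pos hhigh
    have hch : ⌈((t:ℕ):ℝ)^((1:ℝ)/13)⌉₊ = m t := rfl
    rw [hch, ← sub_div]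
    gcongr
    linarith
  · filter_upwards [key, hmt.eventually_ge_atTop 1, eventually_ge_atTop 2] with t hkey hm1 ht2
    obtain ⟨hlow, hhigh⟩ := hkey
    have hm1' : (1:ℝ) ≤ ((m t : ℕ):ℝ) := hm1
    have hf2m_pos : 0 < f (2*((m t : ℕ):ℝ)) := hpos _ (by linarith)
    have hlt : (0:ℝ) < Real.log t := Real.log_pos (by exact_mod_cast by omega)
    have hS_pos : 0 < ∑ s ∈ Finset.Icc (m t) t, f s / s :=
      lt_of_lt_of_le (by positivity) hlow
    have hlogS : Real.log (f (2*((m t : ℕ):ℝ))) - Real.log 2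
        ≤ Real.log (∑ s ∈ Finset.Icc (m t) t, f s / s) := by
      rw [← Real.log_div hf2m_pos.ne' two_ne_zero]
      exact Real.log_le_log (by positivity) hlow
    have hch : ⌈((t:ℕ):ℝ)^((1:ℝ)/13)⌉₊ = m t := rfl
    rw [hch, show Real.log 2 * (Real.log (t:ℕ))⁻¹ = Real.log 2 / Real.log (t:ℕ) from
      (div_eq_mul_inv _ _).symm, ← add_div]
    gcongr
    linarith
end

section
/- For every ξ ∈ (0,1) there exists a threshold T ∈ ℕ such that for all integers t ≥ T, all reals p ∈ (0,1], and all integers l satisfying 1 ≤ l, l · log log t ≤ (1/3) · log t, and l · (−log p) ≤ (1/3) · log t, one has binom( ⌊(1−ξ)·t⌋ , l ) · p^l · (2t)^{−(l−1)} · ( 1 − 2l/(ξ·t) )^{t} ≥ t^{1/4}, where binom(n,l) denotes the binomial coefficient. -/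
open Filter Real

lemma aux_log_one_sub {x : ℝ} (hx0 : 0 ≤ x) (hx : x ≤ 1 / 2) :
    -2 * x ≤ Real.log (1 - x) := by
  have h1 : (0 : ℝ) < 1 - x := by linarith
  rw [Real.le_log_iff_exp_le h1]
  have h2 : (1 : ℝ) + 2 * x ≤ Real.exp (2 * x) := by
    have := Real.add_one_le_exp (2 * x); linarith
  have h3 : (0 : ℝ) < 1 + 2 * x := by linarith
  have h4 : Real.exp (-2 * x) * (1 + 2 * x) ≤ 1 := by
    have he : Real.exp (-2 * x) * Real.exp (2 * x) = 1 := by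
      rw [← Real.exp_add]; norm_num
    calc Real.exp (-2 * x) * (1 + 2 * x) ≤ Real.exp (-2 * x) * Real.exp (2 * x) :=
          mul_le_mul_of_nonneg_left h2 (Real.exp_pos _).le
      _ = 1 := he
  nlinarith [Real.exp_pos (-2 * x), sq_nonneg x]

lemma aux_choose_lower (n l : ℕ) (h : l ≤ n) :
    ((n : ℝ) + 1 - l) ^ l ≤ (l : ℝ) ^ l * (n.choose l : ℝ) := by
  have hnat : (n + 1 - l) ^ l ≤ l ^ l * n.choose l := by
    calc (n + 1 - l) ^ l ≤ n.descFactorial l := Nat.pow_sub_le_descFactorial n l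
      _ = Nat.factorial l * n.choose l := Nat.descFactorial_eq_factorial_mul_choose n l
      _ ≤ l ^ l * n.choose l := Nat.mul_le_mul_right _ (Nat.factorial_le_pow l)
  have hcast : ((n + 1 - l : ℕ) : ℝ) = (n : ℝ) + 1 - l := by
    rw [Nat.cast_sub (by omega)]; push_cast; ring
  have hcast2 : ((n + 1 - l : ℕ) : ℝ) ^ l ≤ (l : ℝ) ^ l * (n.choose l : ℝ) := by
    exact_mod_cast hnat
  rw [hcast] at hcast2
  exact hcast2

set_option maxHeartbeats 1000000 in
/-- For every `ξ ∈ (0,1)` there exists `T ∈ ℕ` such that for all `t ≥ T`, all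
`p ∈ (0,1]` and all `l ≥ 1` with `l·log log t ≤ (1/3)·log t` and
`l·(-log p) ≤ (1/3)·log t`, one has
`binom(⌊(1-ξ)t⌋, l) · p^l · (2t)^{-(l-1)} · (1 - 2l/(ξt))^t ≥ t^{1/4}`. -/
theorem isolated_paths_first_moment_lower_bound (ξ : ℝ) (hξ : ξ ∈ Set.Ioo (0 : ℝ) 1) :
    ∃ T : ℕ, ∀ t : ℕ, T ≤ t → ∀ p : ℝ, p ∈ Set.Ioc (0 : ℝ) 1 → ∀ l : ℕ, 1 ≤ l →
      (l : ℝ) * Real.log (Real.log t) ≤ (1 / 3) * Real.log t →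
      (l : ℝ) * (-Real.log p) ≤ (1 / 3) * Real.log t →
      ((⌊(1 - ξ) * (t : ℝ)⌋₊.choose l : ℕ) : ℝ) * p ^ l * (2 * (t : ℝ)) ^ (-((l : ℤ) - 1)) *
          (1 - 2 * (l : ℝ) / (ξ * t)) ^ t
        ≥ (t : ℝ) ^ ((1 : ℝ) / 4) := by
  obtain ⟨hξ0, hξ1⟩ := hξ
  set c : ℝ := (1 - ξ) / 2 with hc_def
  have hc0 : 0 < c := by simp only [hc_def]; linarith
  set K : ℝ := Real.log 2 - Real.log c + 4 / ξ with hK_def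
  -- small epsilon for log t ≤ ε t
  set ε : ℝ := min (3 * c) (3 * ξ / 4) with hε_def
  have hε0 : 0 < ε := lt_min (by linarith) (by linarith)
  clear_value c K ε
  -- eventual conditions
  have htend : Tendsto (fun t : ℕ => Real.log (Real.log t)) atTop atTop :=
    (Real.tendsto_log_atTop.comp Real.tendsto_log_atTop).comp tendsto_natCast_atTop_atTop
  have hev1 : ∀ᶠ t : ℕ in atTop, max 1 (4 * K) ≤ Real.log (Real.log t) :=
    htend.eventually_ge_atTop _
  have hev2 : ∀ᶠ t : ℕ in atTop, Real.log t ≤ ε * t := by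
    have hb : ∀ᶠ x : ℝ in atTop, ‖Real.log x‖ ≤ ε * ‖x‖ :=
      Real.isLittleO_log_id_atTop.bound hε0
    have hb2 : ∀ᶠ x : ℝ in atTop, Real.log x ≤ ε * x := by
      filter_upwards [hb, eventually_ge_atTop (1 : ℝ)] with x hx hx1
      calc Real.log x ≤ ‖Real.log x‖ := le_abs_self _
        _ ≤ ε * ‖x‖ := hx
        _ = ε * x := by rw [Real.norm_eq_abs, abs_of_nonneg (by linarith)]
    exact tendsto_natCast_atTop_atTop.eventually hb2
  have hev3 : ∀ᶠ t : ℕ in atTop, 1 ≤ t := eventually_ge_atTop 1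
  obtain ⟨T, hT⟩ := eventually_atTop.mp ((hev1.and hev2).and hev3)
  refine ⟨T, fun t ht p hp l hl1 hA hB => ?_⟩
  obtain ⟨⟨hLL, hlog_lin⟩, ht1⟩ := hT t ht
  obtain ⟨hp0, hp1⟩ := hp
  have hLL1 : (1 : ℝ) ≤ Real.log (Real.log t) := le_trans (le_max_left _ _) hLL
  have hLLK : 4 * K ≤ Real.log (Real.log t) := le_trans (le_max_right _ _) hLL
  have ht0 : (0 : ℝ) < t := by exact_mod_cast ht1
  -- log t ≥ 1
  have hlogt1 : (1 : ℝ) ≤ Real.log t := by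
    by_contra h
    push_neg at h
    have : Real.log (Real.log t) ≤ 0 := Real.log_nonpos (by positivity) h.le
    linarith
  have hlogt0 : (0 : ℝ) < Real.log t := by linarith
  have hl0 : (0 : ℝ) < l := by exact_mod_cast hl1
  -- l ≤ (1/3) log t
  have hl_logt : (l : ℝ) ≤ (1 / 3) * Real.log t := by
    calc (l : ℝ) = (l : ℝ) * 1 := by ring
      _ ≤ (l : ℝ) * Real.log (Real.log t) := by
          exact mul_le_mul_of_nonneg_left hLL1 hl0.le
      _ ≤ (1 / 3) * Real.log t := hA
  -- l ≤ c t and l ≤ ξ t / 4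
  have hεc : ε ≤ 3 * c := by rw [hε_def]; exact min_le_left _ _
  have hεξ : ε ≤ 3 * ξ / 4 := by rw [hε_def]; exact min_le_right _ _
  have hl_ct : (l : ℝ) ≤ c * t := by
    have : Real.log t ≤ 3 * c * t := le_trans hlog_lin
      (mul_le_mul_of_nonneg_right hεc ht0.le)
    linarith
  have hl_ξt : (l : ℝ) ≤ ξ * t / 4 := by
    have : Real.log t ≤ 3 * ξ / 4 * t := le_trans hlog_lin
      (mul_le_mul_of_nonneg_right hεξ ht0.le)
    linarith
  -- l ≤ log t, so log l ≤ log log t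
  have hl_le_logt : (l : ℝ) ≤ Real.log t := by linarith
  have hlogl : Real.log l ≤ Real.log (Real.log t) := Real.log_le_log hl0 hl_le_logt
  have hlogl0 : 0 ≤ Real.log l := Real.log_natCast_nonneg l
  -- the x in (1-x)^t
  set x : ℝ := 2 * (l : ℝ) / (ξ * t) with hx_def
  have hξt0 : (0 : ℝ) < ξ * t := by positivity
  have hx0 : 0 ≤ x := by positivity
  have hx_half : x ≤ 1 / 2 := by
    rw [hx_def, div_le_iff₀ hξt0]
    linarith
  have h1x : (0 : ℝ) < 1 - x := by linarith
  -- floor bound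
  set n : ℕ := ⌊(1 - ξ) * (t : ℝ)⌋₊ with hn_def
  have hfloor : (1 - ξ) * (t : ℝ) - 1 < (n : ℝ) := Nat.sub_one_lt_floor _
  have h2c : 1 - ξ = 2 * c := by rw [hc_def]; ring
  have hBig : c * t ≤ (n : ℝ) + 1 - l := by
    have : (1 - ξ) * (t : ℝ) - l ≤ (n : ℝ) + 1 - l := by linarith
    calc c * t = 2 * c * t - c * t := by ring
      _ ≤ (1 - ξ) * t - l := by rw [h2c]; linarith
      _ ≤ (n : ℝ) + 1 - l := this
  have hct0 : (0 : ℝ) < c * t := by positivity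
  have hln : l ≤ n := by
    have h : (l : ℝ) < (n : ℝ) + 1 := by linarith
    have h2 : l < n + 1 := by exact_mod_cast h
    omega
  -- positivity of factors
  have hC0 : (0 : ℝ) < (n.choose l : ℝ) := by
    exact_mod_cast Nat.choose_pos hln
  have hP0 : (0 : ℝ) < p ^ l := pow_pos hp0 l
  have h2t0 : (0 : ℝ) < 2 * (t : ℝ) := by linarith
  have hZ0 : (0 : ℝ) < (2 * (t : ℝ)) ^ (-((l : ℤ) - 1)) := zpow_pos h2t0 _
  have hX0 : (0 : ℝ) < (1 - x) ^ t := pow_pos h1x t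
  have hLHS0 : (0 : ℝ) <
      ((n.choose l : ℕ) : ℝ) * p ^ l * (2 * (t : ℝ)) ^ (-((l : ℤ) - 1)) * (1 - x) ^ t := by
    positivity
  -- reduce to log inequality
  rw [ge_iff_le, show (t : ℝ) ^ ((1 : ℝ) / 4) = Real.exp (1 / 4 * Real.log t) by
    rw [Real.rpow_def_of_pos ht0, mul_comm], ← Real.exp_log hLHS0]
  apply Real.exp_le_exp.mpr
  -- expand the log
  have hlog_expand : Real.log (((n.choose l : ℕ) : ℝ) * p ^ l *
      (2 * (t : ℝ)) ^ (-((l : ℤ) - 1)) * (1 - x) ^ t)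
      = Real.log (n.choose l : ℝ) + (l : ℝ) * Real.log p
        + (-((l : ℝ) - 1)) * Real.log (2 * t) + (t : ℝ) * Real.log (1 - x) := by
    rw [Real.log_mul (by positivity) (ne_of_gt hX0),
        Real.log_mul (by positivity) (ne_of_gt hZ0),
        Real.log_mul (ne_of_gt hC0) (ne_of_gt hP0),
        Real.log_pow, Real.log_pow, Real.log_zpow]
    push_cast
    ring
  rw [hlog_expand]
  -- bound log choose
  have hchoose : (l : ℝ) * (Real.log c + Real.log t - Real.log l)
      ≤ Real.log (n.choose l : ℝ) := by
    have h1 : (c * (t : ℝ) / l) ^ l ≤ (n.choose l : ℝ) := by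
      rw [div_pow, div_le_iff₀ (by positivity)]
      calc (c * (t : ℝ)) ^ l ≤ ((n : ℝ) + 1 - l) ^ l :=
            pow_le_pow_left₀ hct0.le hBig l
        _ ≤ (l : ℝ) ^ l * (n.choose l : ℝ) := aux_choose_lower n l hln
        _ = (n.choose l : ℝ) * (l : ℝ) ^ l := by ring
    have h2 : Real.log ((c * (t : ℝ) / l) ^ l) ≤ Real.log (n.choose l : ℝ) :=
      Real.log_le_log (by positivity) h1
    rw [Real.log_pow, Real.log_div (by positivity) (ne_of_gt hl0),
        Real.log_mul (ne_of_gt hc0) (ne_of_gt ht0)] at h2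
    exact h2
  -- bound the (1-x)^t part
  have hlast : -(4 * (l : ℝ) / ξ) ≤ (t : ℝ) * Real.log (1 - x) := by
    have h1 : -2 * x ≤ Real.log (1 - x) := aux_log_one_sub hx0 hx_half
    have h2 : (t : ℝ) * (-2 * x) ≤ (t : ℝ) * Real.log (1 - x) :=
      mul_le_mul_of_nonneg_left h1 ht0.le
    have h3 : (t : ℝ) * (-2 * x) = -(4 * (l : ℝ) / ξ) := by
      rw [hx_def]
      field_simp
      ring
    linarith
  -- bound log(2t)
  have hlog2t : Real.log (2 * t) = Real.log 2 + Real.log t :=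
    Real.log_mul two_ne_zero (ne_of_gt ht0)
  -- l * log l ≤ (1/3) log t
  have hll : (l : ℝ) * Real.log l ≤ (1 / 3) * Real.log t :=
    le_trans (mul_le_mul_of_nonneg_left hlogl hl0.le) hA
  -- l * log p ≥ -(1/3) log t
  have hlp : -((1 / 3) * Real.log t) ≤ (l : ℝ) * Real.log p := by
    have : (l : ℝ) * (-Real.log p) = -((l : ℝ) * Real.log p) := by ring
    linarith [hB]
  -- l * K ≤ (1/12) log t
  have hlK : (l : ℝ) * K ≤ (1 / 12) * Real.log t := by
    have h1 : (l : ℝ) * K ≤ (l : ℝ) * (Real.log (Real.log t) / 4) :=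
      mul_le_mul_of_nonneg_left (by linarith) hl0.le
    have h2 : (l : ℝ) * (Real.log (Real.log t) / 4) ≤ (1 / 12) * Real.log t := by
      have := hA; linarith
    linarith
  -- log 2 ≥ 0
  have hlog2 : (0 : ℝ) ≤ Real.log 2 := Real.log_nonneg one_le_two
  have hl1' : (1 : ℝ) ≤ (l : ℝ) := by exact_mod_cast hl1
  -- final arithmetic
  have hKexp : (l : ℝ) * K = (l : ℝ) * Real.log 2 - (l : ℝ) * Real.log c
      + 4 * (l : ℝ) / ξ := by
    rw [hK_def]; field_simp
  rw [hlog2t]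
  linarith [hchoose, hlast, hll, hlp, hlK, hKexp, hlog2, hlogt0]
end
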